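/- For every odd integer n > 3, the continued fraction of √(n²+2n-3) is [n; 1, (n-3)/2, 1, 2n repeated], so its period has length 4. -/

import Mathlib

set_option maxHeartbeats 1000000


/-- The sequence of complete quotients of the continued fraction algorithm. -/
noncomputable def cfX (x : ℝ) : ℕ → ℝ
  | 0 => x
  | n + 1 =>
    if cfX x n - ⌊cfX x n⌋ = 0 then 0 else 1 / (cfX x n - ⌊cfX x n⌋)

/-- The partial quotients (continued fraction expansion) of a real number. -/
noncomputable def cfA (x : ℝ) (n : ℕ) : ℤ := ⌊cfX x n⌋

lemma cf_step (x y : ℝ) (a : ℤ) (k : ℕ) (h : cfX x k = y) (hfl : ⌊y⌋ = a)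
    (hne : y - (a : ℝ) ≠ 0) : cfX x (k + 1) = 1 / (y - (a : ℝ)) := by
  rw [cfX, h, hfl, if_neg hne]

lemma cf_congr (x : ℝ) (a b : ℕ) (h : cfX x a = cfX x b) :
    cfX x (a + 1) = cfX x (b + 1) := by
  rw [cfX, cfX, h]

/-- For odd `n > 3`, `√(n²+2n-3) = [n; 1, (n-3)/2, 1, 2n repeated]`,
with period of length 4. -/
theorem sqrt_sq_add_two_n_sub_three_odd (n : ℕ) (hn : 3 < n) (hodd : Odd n) :
    cfA (Real.sqrt ((n : ℝ) ^ 2 + (2 * (n : ℝ) - 3))) 0 = n ∧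
    (∀ k : ℕ,
      cfA (Real.sqrt ((n : ℝ) ^ 2 + (2 * (n : ℝ) - 3))) (4 * k + 1) = 1 ∧
      cfA (Real.sqrt ((n : ℝ) ^ 2 + (2 * (n : ℝ) - 3))) (4 * k + 2) = ((n - 3) / 2 : ℕ) ∧
      cfA (Real.sqrt ((n : ℝ) ^ 2 + (2 * (n : ℝ) - 3))) (4 * k + 3) = 1 ∧
      cfA (Real.sqrt ((n : ℝ) ^ 2 + (2 * (n : ℝ) - 3))) (4 * k + 4) = 2 * n) ∧
    sInf {p : ℕ | 0 < p ∧ ∀ m : ℕ, 1 ≤ m →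
      cfA (Real.sqrt ((n : ℝ) ^ 2 + (2 * (n : ℝ) - 3))) (m + p) = cfA (Real.sqrt ((n : ℝ) ^ 2 + (2 * (n : ℝ) - 3))) m} = 4 := by
  obtain ⟨j, hj⟩ := hodd
  have hn5 : 5 ≤ n := by omega
  set m : ℕ := (n - 3) / 2 with hm
  have hnm : n = 2 * m + 3 := by omega
  have hm1 : 1 ≤ m := by omega
  set x : ℝ := Real.sqrt ((n : ℝ) ^ 2 + (2 * (n : ℝ) - 3)) with hxdef
  have hnR : (5:ℝ) ≤ (n:ℝ) := by exact_mod_cast hn5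
  have hmR : (n:ℝ) = 2 * (m:ℝ) + 3 := by exact_mod_cast hnm
  have hd0 : (0:ℝ) ≤ (n : ℝ) ^ 2 + (2 * (n : ℝ) - 3) := by nlinarith
  have hx2 : x ^ 2 = (n : ℝ) ^ 2 + (2 * (n : ℝ) - 3) := Real.sq_sqrt hd0
  have hx0 : 0 ≤ x := Real.sqrt_nonneg _
  have hlb : (n : ℝ) < x := by nlinarith
  have hub : x < (n : ℝ) + 1 := by nlinarith
  -- values of the complete quotients
  set v1 : ℝ := (x + n) / (2 * n - 3) with hv1
  set v2 : ℝ := (x + n - 3) / 4 with hv2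
  set v3 : ℝ := (x + n - 3) / (2 * n - 3) with hv3
  set v4 : ℝ := x + n with hv4
  -- floor of x
  have hf0 : ⌊x⌋ = (n : ℤ) := by
    rw [Int.floor_eq_iff]
    push_cast
    constructor <;> linarith
  have hf1e : ⌊v1⌋ = (1 : ℤ) := by
    rw [hv1, Int.floor_eq_iff]
    push_cast
    constructor
    · rw [le_div_iff₀ (by linarith)]; linarith
    · rw [div_lt_iff₀ (by linarith)]; linarith
  have hf2e : ⌊v2⌋ = (m : ℤ) := by
    rw [hv2, Int.floor_eq_iff]
    push_cast
    constructor
    · rw [le_div_iff₀ (by norm_num)]; linarith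
    · rw [div_lt_iff₀ (by norm_num)]; linarith
  have hf3e : ⌊v3⌋ = (1 : ℤ) := by
    rw [hv3, Int.floor_eq_iff]
    push_cast
    constructor
    · rw [le_div_iff₀ (by linarith)]; linarith
    · rw [div_lt_iff₀ (by linarith)]; linarith
  have hf4e : ⌊v4⌋ = (2 * n : ℤ) := by
    rw [hv4, Int.floor_eq_iff]
    push_cast
    constructor <;> linarith
  -- the complete quotients
  have e1 : cfX x 1 = v1 := by
    have h : cfX x 1 = 1 / (x - ((n:ℤ):ℝ)) := cf_step x x (n:ℤ) 0 rfl hf0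
      (by push_cast; intro h; linarith)
    rw [h, hv1]
    push_cast
    rw [div_eq_div_iff (by linarith) (by linarith)]
    nlinarith
  have e2 : cfX x 2 = v2 := by
    have hne : v1 - ((1:ℤ):ℝ) ≠ 0 := by
      rw [hv1]; push_cast
      rw [div_sub' (by linarith : (2*(n:ℝ)-3) ≠ 0)]
      intro h
      rcases div_eq_zero_iff.mp h with h' | h' <;> linarith
    have h : cfX x 2 = 1 / (v1 - ((1:ℤ):ℝ)) := cf_step x v1 1 1 e1 hf1e hne
    rw [h, hv1, hv2]
    push_cast
    rw [div_sub' (by linarith : (2*(n:ℝ)-3) ≠ 0), one_div_div]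
    rw [div_eq_div_iff (by linarith) (by norm_num)]
    nlinarith
  have e3 : cfX x 3 = v3 := by
    have hne : v2 - ((m:ℤ):ℝ) ≠ 0 := by
      rw [hv2]; push_cast
      rw [div_sub' (by norm_num : (4:ℝ) ≠ 0)]
      intro h
      rcases div_eq_zero_iff.mp h with h' | h' <;> linarith
    have h : cfX x 3 = 1 / (v2 - ((m:ℤ):ℝ)) := cf_step x v2 (m:ℤ) 2 e2 hf2e hne
    rw [h, hv2, hv3]
    push_cast
    rw [div_sub' (by norm_num : (4:ℝ) ≠ 0), one_div_div]
    rw [div_eq_div_iff (by nlinarith) (by linarith)]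
    nlinarith
  have e4 : cfX x 4 = v4 := by
    have hne : v3 - ((1:ℤ):ℝ) ≠ 0 := by
      rw [hv3]; push_cast
      rw [div_sub' (by linarith : (2*(n:ℝ)-3) ≠ 0)]
      intro h
      rcases div_eq_zero_iff.mp h with h' | h' <;> linarith
    have h : cfX x 4 = 1 / (v3 - ((1:ℤ):ℝ)) := cf_step x v3 1 3 e3 hf3e hne
    rw [h, hv3, hv4]
    push_cast
    rw [div_sub' (by linarith : (2*(n:ℝ)-3) ≠ 0), one_div_div]
    rw [div_eq_iff (by linarith)]
    nlinarith
  have e5 : cfX x 5 = cfX x 1 := by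
    have hne : v4 - ((2 * n : ℤ):ℝ) ≠ 0 := by
      rw [hv4]; push_cast; intro h; linarith
    have h : cfX x 5 = 1 / (v4 - ((2 * n : ℤ):ℝ)) := cf_step x v4 (2*n) 4 e4 hf4e hne
    rw [h, e1, hv4, hv1]
    push_cast
    rw [one_div, eq_div_iff (by linarith), inv_mul_eq_div, div_eq_iff (by intro hc; nlinarith)]
    nlinarith
  have hf1 : ⌊cfX x 1⌋ = 1 := by rw [e1, hf1e]
  have hf2 : ⌊cfX x 2⌋ = (m : ℤ) := by rw [e2, hf2e]
  have hf3 : ⌊cfX x 3⌋ = 1 := by rw [e3, hf3e]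
  have hf4 : ⌊cfX x 4⌋ = (2 * n : ℤ) := by rw [e4, hf4e]
  -- periodicity of complete quotients
  have hper : ∀ k : ℕ, 1 ≤ k → cfX x (k + 4) = cfX x k := by
    intro k hk
    induction k with
    | zero => omega
    | succ i ih =>
      rcases Nat.eq_zero_or_pos i with hi | hi
      · subst hi; exact e5
      · exact cf_congr x (i + 4) i (ih hi)
  have hperk : ∀ (k q : ℕ), 1 ≤ q → cfX x (q + 4 * k) = cfX x q := by
    intro k
    induction k with
    | zero => intro q _; rfl
    | succ i ih =>
      intro q hq
      have h : q + 4 * (i + 1) = (q + 4 * i) + 4 := by ring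
      rw [h, hper _ (by omega), ih q hq]
  refine ⟨?_, ?_, ?_⟩
  · exact hf0
  · intro k
    refine ⟨?_, ?_, ?_, ?_⟩
    · show ⌊cfX x (4 * k + 1)⌋ = 1
      rw [show 4 * k + 1 = 1 + 4 * k by ring, hperk k 1 (by norm_num), hf1]
    · show ⌊cfX x (4 * k + 2)⌋ = (m : ℤ)
      rw [show 4 * k + 2 = 2 + 4 * k by ring, hperk k 2 (by norm_num), hf2]
    · show ⌊cfX x (4 * k + 3)⌋ = 1
      rw [show 4 * k + 3 = 3 + 4 * k by ring, hperk k 3 (by norm_num), hf3]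
    · show ⌊cfX x (4 * k + 4)⌋ = 2 * (n : ℤ)
      rw [show 4 * k + 4 = 4 + 4 * k by ring, hperk k 4 (by norm_num), hf4]
  · have h4mem : (4:ℕ) ∈ {p : ℕ | 0 < p ∧ ∀ q : ℕ, 1 ≤ q →
        cfA x (q + p) = cfA x q} := by
      refine ⟨by norm_num, fun q hq => ?_⟩
      show ⌊cfX x (q + 4)⌋ = ⌊cfX x q⌋
      rw [hper q hq]
    have hne : {p : ℕ | 0 < p ∧ ∀ q : ℕ, 1 ≤ q →
        cfA x (q + p) = cfA x q}.Nonempty := ⟨4, h4mem⟩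
    have hmem := Nat.sInf_mem hne
    obtain ⟨hp0, hp⟩ := hmem
    have hle : sInf {p : ℕ | 0 < p ∧ ∀ q : ℕ, 1 ≤ q →
        cfA x (q + p) = cfA x q} ≤ 4 := Nat.sInf_le h4mem
    set p := sInf {p : ℕ | 0 < p ∧ ∀ q : ℕ, 1 ≤ q →
        cfA x (q + p) = cfA x q} with hpdef
    interval_cases p
    · exfalso
      have h := hp 3 (by norm_num)
      rw [show (3:ℕ) + 1 = 4 from rfl] at h
      have h4 : cfA x 4 = (2 * n : ℤ) := hf4
      have h3 : cfA x 3 = 1 := hf3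
      rw [h4, h3] at h
      omega
    · exfalso
      have h := hp 2 (by norm_num)
      rw [show (2:ℕ) + 2 = 4 from rfl] at h
      have h4 : cfA x 4 = (2 * n : ℤ) := hf4
      have h2 : cfA x 2 = (m : ℤ) := hf2
      rw [h4, h2] at h
      omega
    · exfalso
      have h := hp 1 (by norm_num)
      rw [show (1:ℕ) + 3 = 4 from rfl] at h
      have h4 : cfA x 4 = (2 * n : ℤ) := hf4
      have h1 : cfA x 1 = 1 := hf1
      rw [h4, h1] at h
      omega
    · rfl
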